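/- Let M, N, L ⊆ ℝ³ be compact sets, μ a Borel probability measure on M and ν a Borel probability measure on N. Let C : M → N be a Borel measurable map with pushforward of μ under C equal to ν, and let C' : N → L be a Borel measurable map. Then dₚ(M,L;C'∘C) ≤ dₚ(M,N;C) + dₚ(N,L;C'), where each discrepancy is computed with μ on M and ν on N respectively. -/

import Mathlib

open MeasureTheory

noncomputable section

local notation "E3" => EuclideanSpace ℝ (Fin 3)

/-- Minkowski inequality in the `sqrt`-of-integral form. -/
lemma sqrt_integral_add_sq_le {α : Type*} [MeasurableSpace α] {μ : Measure α}
    {a b : α → ℝ} (ha : MemLp a 2 μ) (hb : MemLp b 2 μ) :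
    Real.sqrt (∫ x, (a x + b x) ^ 2 ∂μ)
      ≤ Real.sqrt (∫ x, a x ^ 2 ∂μ) + Real.sqrt (∫ x, b x ^ 2 ∂μ) := by
  have key : ∀ (c : α → ℝ) (hc : MemLp c 2 μ),
      Real.sqrt (∫ x, c x ^ 2 ∂μ) = ‖hc.toLp c‖ := by
    intro c hc
    have h1 : ‖hc.toLp c‖ ^ 2 = ∫ x, c x ^ 2 ∂μ := by
      rw [← real_inner_self_eq_norm_sq, L2.inner_def]
      refine integral_congr_ae ?_
      filter_upwards [hc.coeFn_toLp] with x hx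
      simp [hx, RCLike.inner_apply, sq]
    rw [← h1, Real.sqrt_sq (norm_nonneg _)]
  rw [key a ha, key b hb, key (fun x => a x + b x) (ha.add hb)]
  have : (ha.add hb).toLp (fun x => a x + b x) = ha.toLp a + hb.toLp b := by
    rw [← MemLp.toLp_add]
    exact MemLp.toLp_congr _ _ (Filter.Eventually.of_forall fun x => rfl)
  rw [this]
  exact norm_add_le _ _

/-- Triangle inequality for the Procrustes discrepancy along a composition:
`dₚ(M,L;C'∘C) ≤ dₚ(M,N;C) + dₚ(N,L;C')`, where `C` pushes `μ` forward to `ν`. -/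
theorem procrustes_triangle_composition
    (M N L : Set E3) (hM : IsCompact M) (hN : IsCompact N) (hL : IsCompact L)
    (μ ν : Measure E3) [IsProbabilityMeasure μ] [IsProbabilityMeasure ν]
    (hμM : μ Mᶜ = 0) (hνN : ν Nᶜ = 0)
    (C : E3 → E3) (hCmeas : Measurable C) (hCmaps : Set.MapsTo C M N)
    (hpush : Measure.map C μ = ν)
    (C' : E3 → E3) (hC'meas : Measurable C') (hC'maps : Set.MapsTo C' N L) :
    (⨅ R : E3 ≃ᵃⁱ[ℝ] E3, Real.sqrt (∫ x in M, ‖R x - C' (C x)‖ ^ 2 ∂μ))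
      ≤ (⨅ R : E3 ≃ᵃⁱ[ℝ] E3, Real.sqrt (∫ x in M, ‖R x - C x‖ ^ 2 ∂μ))
        + ⨅ R : E3 ≃ᵃⁱ[ℝ] E3, Real.sqrt (∫ y in N, ‖R y - C' y‖ ^ 2 ∂ν) := by
  have haeM : ∀ᵐ x ∂μ, x ∈ M := by
    rw [MeasureTheory.ae_iff]; exact hμM
  have haeN : ∀ᵐ y ∂ν, y ∈ N := by
    rw [MeasureTheory.ae_iff]; exact hνN
  have hrM : μ.restrict M = μ := Measure.restrict_eq_self_of_ae_mem haeM
  have hrN : ν.restrict N = ν := Measure.restrict_eq_self_of_ae_mem haeN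
  simp only [hrM, hrN]
  -- bounds on the compact sets
  obtain ⟨KM, hKM⟩ := hM.isBounded.exists_norm_le
  obtain ⟨KN, hKN⟩ := hN.isBounded.exists_norm_le
  obtain ⟨KL, hKL⟩ := hL.isBounded.exists_norm_le
  -- a general `Memℒp` criterion for the functions we use
  have memL2 : ∀ (f : E3 → E3) (_ : Measurable f) (K : ℝ)
      (_ : ∀ᵐ x ∂μ, ‖f x‖ ≤ K), MemLp (fun x => ‖f x‖) 2 μ := by
    intro f hf K hK
    refine MemLp.of_bound hf.norm.aestronglyMeasurable K ?_
    filter_upwards [hK] with x hx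
    simpa using hx
  refine le_ciInf_add_ciInf fun R₁ R₂ => ?_
  -- the candidate transformation
  set R : E3 ≃ᵃⁱ[ℝ] E3 := R₁.trans R₂ with hR
  -- abbreviations
  set a : E3 → ℝ := fun x => ‖R₁ x - C x‖ with haa
  set b : E3 → ℝ := fun x => ‖R₂ (C x) - C' (C x)‖ with hbb
  have hR₁meas : Measurable fun x => R₁ x := R₁.continuous.measurable
  have hR₂meas : Measurable fun x => R₂ x := R₂.continuous.measurable
  have haMeas : Measurable fun x => R₁ x - C x := hR₁meas.sub hCmeas
  have hbMeas : Measurable fun x => R₂ (C x) - C' (C x) :=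
    (hR₂meas.comp hCmeas).sub (hC'meas.comp hCmeas)
  -- norm bounds for isometries on bounded sets
  have isom_bound : ∀ (S : E3 ≃ᵃⁱ[ℝ] E3) (x : E3), ‖S x‖ ≤ ‖x‖ + ‖S 0‖ := by
    intro S x
    have : ‖S x - S 0‖ = ‖x - 0‖ := by
      rw [← dist_eq_norm, ← dist_eq_norm, S.dist_map]
    calc ‖S x‖ = ‖(S x - S 0) + S 0‖ := by rw [sub_add_cancel]
      _ ≤ ‖S x - S 0‖ + ‖S 0‖ := norm_add_le _ _
      _ = ‖x - 0‖ + ‖S 0‖ := by rw [this]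
      _ = ‖x‖ + ‖S 0‖ := by rw [sub_zero]
  have haBound : ∀ᵐ x ∂μ, ‖R₁ x - C x‖ ≤ (KM + ‖R₁ 0‖) + KN := by
    filter_upwards [haeM] with x hx
    calc ‖R₁ x - C x‖ ≤ ‖R₁ x‖ + ‖C x‖ := norm_sub_le _ _
      _ ≤ (‖x‖ + ‖R₁ 0‖) + KN :=
        add_le_add (isom_bound R₁ x) (hKN _ (hCmaps hx))
      _ ≤ (KM + ‖R₁ 0‖) + KN := by
        have := hKM x hx; linarith
  have hbBound : ∀ᵐ x ∂μ, ‖R₂ (C x) - C' (C x)‖ ≤ (KN + ‖R₂ 0‖) + KL := by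
    filter_upwards [haeM] with x hx
    have hCx : C x ∈ N := hCmaps hx
    calc ‖R₂ (C x) - C' (C x)‖ ≤ ‖R₂ (C x)‖ + ‖C' (C x)‖ := norm_sub_le _ _
      _ ≤ (‖C x‖ + ‖R₂ 0‖) + KL :=
        add_le_add (isom_bound R₂ (C x)) (hKL _ (hC'maps hCx))
      _ ≤ (KN + ‖R₂ 0‖) + KL := by
        have := hKN _ hCx; linarith
  have haL2 : MemLp a 2 μ := memL2 _ haMeas _ haBound
  have hbL2 : MemLp b 2 μ := memL2 _ hbMeas _ hbBound
  -- first step: bound the infimum by the value at `R`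
  have hstep1 : (⨅ S : E3 ≃ᵃⁱ[ℝ] E3, Real.sqrt (∫ x, ‖S x - C' (C x)‖ ^ 2 ∂μ))
      ≤ Real.sqrt (∫ x, ‖R x - C' (C x)‖ ^ 2 ∂μ) := by
    refine ciInf_le ⟨0, ?_⟩ R
    rintro y ⟨S, rfl⟩
    exact Real.sqrt_nonneg _
  refine hstep1.trans ?_
  -- pointwise triangle inequality
  have hpt : ∀ᵐ x ∂μ, ‖R x - C' (C x)‖ ^ 2 ≤ (a x + b x) ^ 2 := by
    filter_upwards [] with x
    have h1 : ‖R x - C' (C x)‖ ≤ a x + b x := by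
      have h2 : ‖R₂ (R₁ x) - R₂ (C x)‖ = ‖R₁ x - C x‖ := by
        rw [← dist_eq_norm, ← dist_eq_norm, R₂.dist_map]
      calc ‖R x - C' (C x)‖
          = ‖(R₂ (R₁ x) - R₂ (C x)) + (R₂ (C x) - C' (C x))‖ := by
            have hRx : R x = R₂ (R₁ x) := rfl
            rw [hRx]; congr 1; abel
        _ ≤ ‖R₂ (R₁ x) - R₂ (C x)‖ + ‖R₂ (C x) - C' (C x)‖ := norm_add_le _ _
        _ = a x + b x := by rw [h2]
    have hnn : (0:ℝ) ≤ ‖R x - C' (C x)‖ := norm_nonneg _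
    have hab : (0:ℝ) ≤ a x + b x := le_trans hnn h1
    nlinarith
  -- integrability of both sides
  have hLHSmeas : Measurable fun x => R x - C' (C x) :=
    (R.continuous.measurable).sub (hC'meas.comp hCmeas)
  have hLHSbound : ∀ᵐ x ∂μ, ‖R x - C' (C x)‖ ≤ (KM + ‖R 0‖) + KL := by
    filter_upwards [haeM] with x hx
    calc ‖R x - C' (C x)‖ ≤ ‖R x‖ + ‖C' (C x)‖ := norm_sub_le _ _
      _ ≤ (‖x‖ + ‖R 0‖) + KL :=
        add_le_add (isom_bound R x) (hKL _ (hC'maps (hCmaps hx)))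
      _ ≤ (KM + ‖R 0‖) + KL := by
        have := hKM x hx; linarith
  have hLHSL2 : MemLp (fun x => ‖R x - C' (C x)‖) 2 μ := memL2 _ hLHSmeas _ hLHSbound
  have hint1 : Integrable (fun x => ‖R x - C' (C x)‖ ^ 2) μ := hLHSL2.integrable_sq
  have hint2 : Integrable (fun x => (a x + b x) ^ 2) μ := (haL2.add hbL2).integrable_sq
  have hstep2 : (∫ x, ‖R x - C' (C x)‖ ^ 2 ∂μ) ≤ ∫ x, (a x + b x) ^ 2 ∂μ :=
    integral_mono_ae hint1 hint2 hpt
  have hstep3 := sqrt_integral_add_sq_le haL2 hbL2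
  have hchange : (∫ x, b x ^ 2 ∂μ) = ∫ y, ‖R₂ y - C' y‖ ^ 2 ∂ν := by
    rw [← hpush, integral_map hCmeas.aemeasurable]
    exact ((hR₂meas.sub hC'meas).norm.pow_const 2).aestronglyMeasurable
  calc Real.sqrt (∫ x, ‖R x - C' (C x)‖ ^ 2 ∂μ)
      ≤ Real.sqrt (∫ x, (a x + b x) ^ 2 ∂μ) := Real.sqrt_le_sqrt hstep2
    _ ≤ Real.sqrt (∫ x, a x ^ 2 ∂μ) + Real.sqrt (∫ x, b x ^ 2 ∂μ) := hstep3
    _ = Real.sqrt (∫ x, ‖R₁ x - C x‖ ^ 2 ∂μ)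
        + Real.sqrt (∫ y, ‖R₂ y - C' y‖ ^ 2 ∂ν) := by rw [hchange]
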